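/- Let f : ℝ_{>0}^n → ℝ, f(x) = ∑_{μ ∈ σ(f)} c_μ x^μ be a signomial, let (H_{v,a}, H_{v,b}) with a ≥ b be a pair of enclosing hyperplanes of σ_+(f), and set A = (H^+_{v,a} ∩ σ_-(f)) ∪ σ_+(f), B = (H^-_{v,b} ∩ σ_-(f)) ∪ σ_+(f). Consider the bipartite graph whose vertex set is the disjoint union of the sets of connected components of f|_A^{-1}(ℝ_{<0}) and of f|_B^{-1}(ℝ_{<0}), with an edge between a component U of f|_A^{-1}(ℝ_{<0}) and a component V of f|_B^{-1}(ℝ_{<0}) whenever U ∩ V ≠ ∅, and let C be the number of connected components of this graph. Then the number of connected components of f^{-1}(ℝ_{<0}) is at most C, and C is at most the number of connected components of f|_A^{-1}(ℝ_{<0}) plus the number of connected components of f|_B^{-1}(ℝ_{<0}). -/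

import Mathlib

open Finset

/-- The signomial `x ↦ ∑_{μ ∈ S} c μ * x^μ` (with real exponents, via `Real.rpow`). -/
noncomputable def sig {n : ℕ} (S : Finset (Fin n → ℝ)) (c : (Fin n → ℝ) → ℝ)
    (x : Fin n → ℝ) : ℝ :=
  ∑ μ ∈ S, c μ * ∏ i, x i ^ μ i

open Classical in
/-- The restriction `f|_F` of the signomial to a subset `F ⊆ ℝⁿ` of exponent vectors. -/
noncomputable def sigOn {n : ℕ} (S : Finset (Fin n → ℝ)) (c : (Fin n → ℝ) → ℝ)
    (F : Set (Fin n → ℝ)) (x : Fin n → ℝ) : ℝ :=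
  ∑ μ ∈ S, if μ ∈ F then c μ * ∏ i, x i ^ μ i else 0

/-- `f⁻¹(ℝ_{<0})`: the points of the positive orthant where the signomial is negative. -/
def negSet {n : ℕ} (S : Finset (Fin n → ℝ)) (c : (Fin n → ℝ) → ℝ) : Set (Fin n → ℝ) :=
  {x | (∀ i, 0 < x i) ∧ sig S c x < 0}

/-- `(f|_F)⁻¹(ℝ_{<0})`. -/
def negSetOn {n : ℕ} (S : Finset (Fin n → ℝ)) (c : (Fin n → ℝ) → ℝ)
    (F : Set (Fin n → ℝ)) : Set (Fin n → ℝ) :=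
  {x | (∀ i, 0 < x i) ∧ sigOn S c F x < 0}

/-- `σ₊(f)`: the positive exponent vectors. -/
def sigPosS {n : ℕ} (S : Finset (Fin n → ℝ)) (c : (Fin n → ℝ) → ℝ) : Set (Fin n → ℝ) :=
  {μ | μ ∈ S ∧ 0 < c μ}

/-- `σ₋(f)`: the negative exponent vectors. -/
def sigNegS {n : ℕ} (S : Finset (Fin n → ℝ)) (c : (Fin n → ℝ) → ℝ) : Set (Fin n → ℝ) :=
  {μ | μ ∈ S ∧ c μ < 0}

/-- The hyperplane `H_{v,a}`. -/
def Hyp {n : ℕ} (v : Fin n → ℝ) (a : ℝ) : Set (Fin n → ℝ) :=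
  {μ | ∑ i, v i * μ i = a}

/-- The closed half-space `H⁺_{v,a}`. -/
def Hplus {n : ℕ} (v : Fin n → ℝ) (a : ℝ) : Set (Fin n → ℝ) :=
  {μ | a ≤ ∑ i, v i * μ i}

/-- The closed half-space `H⁻_{v,a}`. -/
def Hminus {n : ℕ} (v : Fin n → ℝ) (a : ℝ) : Set (Fin n → ℝ) :=
  {μ | ∑ i, v i * μ i ≤ a}

/-- The open half-space `H^{+,∘}_{v,a}`. -/
def HplusO {n : ℕ} (v : Fin n → ℝ) (a : ℝ) : Set (Fin n → ℝ) :=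
  {μ | a < ∑ i, v i * μ i}

/-- The open half-space `H^{-,∘}_{v,a}`. -/
def HminusO {n : ℕ} (v : Fin n → ℝ) (a : ℝ) : Set (Fin n → ℝ) :=
  {μ | ∑ i, v i * μ i < a}

/-- `U` is a connected component of `X` (a maximal nonempty preconnected subset of `X`). -/
def IsConnComp {n : ℕ} (X U : Set (Fin n → ℝ)) : Prop :=
  U.Nonempty ∧ U ⊆ X ∧ IsPreconnected U ∧
    ∀ W, U ⊆ W → W ⊆ X → IsPreconnected W → W = U

/-- The number (cardinality) of connected components of `X`. -/
noncomputable def compCard {n : ℕ} (X : Set (Fin n → ℝ)) : Cardinal :=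
  Cardinal.mk {U : Set (Fin n → ℝ) // IsConnComp X U}

/-- The face `N(f)_v` of the Newton polytope of a signomial with support `S`,
with outer normal vector `v`. -/
def faceOf {n : ℕ} (S : Finset (Fin n → ℝ)) (v : Fin n → ℝ) : Set (Fin n → ℝ) :=
  {ω ∈ convexHull ℝ (↑S : Set (Fin n → ℝ)) |
    ∀ μ ∈ convexHull ℝ (↑S : Set (Fin n → ℝ)), ∑ i, v i * μ i ≤ ∑ i, v i * ω i}

namespace SigProof

open Real Filter

variable {ι : Type*}

noncomputable def ES (T : Finset ι) (m e : ι → ℝ) (t : ℝ) : ℝ :=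
  ∑ μ ∈ T, m μ * Real.exp (e μ * t)

lemma ES_continuous (T : Finset ι) (m e : ι → ℝ) : Continuous (ES T m e) := by
  apply continuous_finset_sum
  intro μ _
  exact continuous_const.mul (Real.continuous_exp.comp (continuous_const.mul continuous_id))

lemma ES_nonneg (T : Finset ι) (m e : ι → ℝ) (hm : ∀ μ ∈ T, 0 ≤ m μ) (t : ℝ) :
    0 ≤ ES T m e t :=
  Finset.sum_nonneg fun μ hμ => mul_nonneg (hm μ hμ) (Real.exp_pos _).le

lemma single_le_ES (T : Finset ι) (m e : ι → ℝ) (hm : ∀ μ ∈ T, 0 ≤ m μ) {μ₀ : ι}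
    (hμ₀ : μ₀ ∈ T) (t : ℝ) :
    m μ₀ * Real.exp (e μ₀ * t) ≤ ES T m e t := by
  unfold ES
  exact Finset.single_le_sum
    (f := fun μ => m μ * Real.exp (e μ * t))
    (fun μ hμ => mul_nonneg (hm μ hμ) (Real.exp_pos _).le) hμ₀

lemma ES_le_mul_exp (T : Finset ι) (m e : ι → ℝ) (β : ℝ) (hm : ∀ μ ∈ T, 0 ≤ m μ)
    (he : ∀ μ ∈ T, e μ ≤ β) {t : ℝ} (ht : 0 ≤ t) :
    ES T m e t ≤ (∑ μ ∈ T, m μ) * Real.exp (β * t) := by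
  rw [Finset.sum_mul]
  refine Finset.sum_le_sum fun μ hμ => ?_
  exact mul_le_mul_of_nonneg_left
    (Real.exp_le_exp.2 (mul_le_mul_of_nonneg_right (he μ hμ) ht)) (hm μ hμ)

lemma ES_coeffs_zero (T : Finset ι) (m e : ι → ℝ) (hm : ∀ μ ∈ T, 0 ≤ m μ) {s : ℝ}
    (h : ES T m e s = 0) : ∀ μ ∈ T, m μ = 0 := by
  intro μ hμ
  have h2 := (Finset.sum_eq_zero_iff_of_nonneg
    (fun μ hμ => mul_nonneg (hm μ hμ) (Real.exp_pos _).le)).1 h μ hμ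
  exact (mul_eq_zero.1 h2).resolve_right (Real.exp_pos _).ne'

lemma ES_hasDerivAt (T : Finset ι) (m e : ι → ℝ) (t : ℝ) :
    HasDerivAt (ES T m e) (ES T (fun μ => m μ * e μ) e t) t := by
  have h : HasDerivAt (fun t => ∑ μ ∈ T, m μ * Real.exp (e μ * t))
      (∑ μ ∈ T, m μ * (Real.exp (e μ * t) * (e μ * 1))) t := by
    apply HasDerivAt.fun_sum
    intro μ _
    exact (((hasDerivAt_id t).const_mul (e μ)).exp).const_mul (m μ)
  have h2 : (∑ μ ∈ T, m μ * (Real.exp (e μ * t) * (e μ * 1)))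
      = ES T (fun μ => m μ * e μ) e t := by
    unfold ES; apply Finset.sum_congr rfl; intros; ring
  exact h2 ▸ h

lemma ES_deriv_ge (T : Finset ι) (m e : ι → ℝ) (β : ℝ) (hm : ∀ μ ∈ T, 0 ≤ m μ)
    (he : ∀ μ ∈ T, β ≤ e μ) (t : ℝ) :
    β * ES T m e t ≤ ES T (fun μ => m μ * e μ) e t := by
  unfold ES
  rw [Finset.mul_sum]
  refine Finset.sum_le_sum fun μ hμ => ?_
  dsimp only
  nlinarith [mul_nonneg (mul_nonneg (sub_nonneg.2 (he μ hμ)) (hm μ hμ))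
    (Real.exp_pos (e μ * t)).le]

lemma ES_deriv_le (T : Finset ι) (m e : ι → ℝ) (β : ℝ) (hm : ∀ μ ∈ T, 0 ≤ m μ)
    (he : ∀ μ ∈ T, e μ ≤ β) (t : ℝ) :
    ES T (fun μ => m μ * e μ) e t ≤ β * ES T m e t := by
  unfold ES
  rw [Finset.mul_sum]
  refine Finset.sum_le_sum fun μ hμ => ?_
  dsimp only
  nlinarith [mul_nonneg (mul_nonneg (sub_nonneg.2 (he μ hμ)) (hm μ hμ))
    (Real.exp_pos (e μ * t)).le]

lemma ES_neg_coeff (T : Finset ι) (m e : ι → ℝ) (t : ℝ) :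
    ES T (fun μ => -m μ) e t = -ES T m e t := by
  simp [ES]

lemma ES_reflect (T : Finset ι) (m e : ι → ℝ) (t : ℝ) :
    ES T m (fun μ => -e μ) t = ES T m e (-t) := by
  simp [ES, neg_mul, mul_neg]

lemma ES_mul_exp_neg (T : Finset ι) (m e : ι → ℝ) (a t : ℝ) :
    ES T m e t * Real.exp (-(a * t)) = ES T m (fun μ => e μ - a) t := by
  unfold ES
  rw [Finset.sum_mul]
  apply Finset.sum_congr rfl
  intro μ _
  rw [mul_assoc, ← Real.exp_add]
  ring_nf

lemma ES_const_exp (T : Finset ι) (m e : ι → ℝ) (a : ℝ) (h : ∀ μ ∈ T, e μ = a) (t : ℝ) :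
    ES T m e t = (∑ μ ∈ T, m μ) * Real.exp (a * t) := by
  unfold ES
  rw [Finset.sum_mul]
  exact Finset.sum_congr rfl fun μ hμ => by rw [h μ hμ]

lemma ES_tendsto_zero (T : Finset ι) (m e : ι → ℝ) (he : ∀ μ ∈ T, e μ < 0) :
    Tendsto (ES T m e) atTop (nhds 0) := by
  have h : Tendsto (fun t => ∑ μ ∈ T, m μ * Real.exp (e μ * t)) atTop
      (nhds (∑ μ ∈ T, (0 : ℝ))) := by
    apply tendsto_finset_sum
    intro μ hμ
    have h1 : Tendsto (fun t : ℝ => (-e μ) * t) atTop atTop :=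
      Tendsto.const_mul_atTop (by linarith [he μ hμ]) tendsto_id
    have h2 : Tendsto (fun t : ℝ => e μ * t) atTop atBot := by
      have h2' := tendsto_neg_atTop_atBot.comp h1
      refine h2'.congr fun t => ?_
      simp [Function.comp]
    have h3 := Real.tendsto_exp_atBot.comp h2
    have h4 : Tendsto (fun t => m μ * Real.exp (e μ * t)) atTop (nhds (m μ * 0)) :=
      (h3.const_mul (m μ))
    simpa using h4
  exact (by simpa using h : Tendsto (fun t => ∑ μ ∈ T, m μ * Real.exp (e μ * t)) atTop (nhds 0))

lemma cross (T₁ T₂ : Finset ι) (m₁ m₂ e : ι → ℝ) (β : ℝ)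
    (hm₁ : ∀ μ ∈ T₁, 0 ≤ m₁ μ) (he₁ : ∀ μ ∈ T₁, β ≤ e μ)
    (hm₂ : ∀ μ ∈ T₂, 0 ≤ m₂ μ) (he₂ : ∀ μ ∈ T₂, e μ ≤ β)
    {s u : ℝ} (hsu : s ≤ u) :
    ES T₁ m₁ e s * ES T₂ m₂ e u ≤ ES T₁ m₁ e u * ES T₂ m₂ e s := by
  set E1 := ES T₁ m₁ e with hE1
  set D1 := ES T₁ (fun μ => m₁ μ * e μ) e with hD1
  set E2 := ES T₂ m₂ e with hE2
  set D2 := ES T₂ (fun μ => m₂ μ * e μ) e with hD2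
  set F : ℝ → ℝ := fun w => Real.exp ((-β) * w) * (E1 w * E2 s - E1 s * E2 w) with hF
  have hder : ∀ w, HasDerivAt F
      (Real.exp ((-β) * w) * ((-β) * 1) * (E1 w * E2 s - E1 s * E2 w)
        + Real.exp ((-β) * w) * (D1 w * E2 s - E1 s * D2 w)) w := by
    intro w
    have h1 : HasDerivAt (fun y : ℝ => Real.exp ((-β) * y))
        (Real.exp ((-β) * w) * ((-β) * 1)) w :=
      ((hasDerivAt_id w).const_mul (-β)).exp
    have h2 : HasDerivAt (fun y => E1 y * E2 s - E1 s * E2 y)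
        (D1 w * E2 s - E1 s * D2 w) w :=
      ((ES_hasDerivAt T₁ m₁ e w).mul_const (E2 s)).sub
        ((ES_hasDerivAt T₂ m₂ e w).const_mul (E1 s))
    exact h1.mul h2
  have hmono : Monotone F := by
    apply monotone_of_deriv_nonneg (fun w => (hder w).differentiableAt)
    intro w
    rw [(hder w).deriv]
    have d1 : β * E1 w ≤ D1 w := ES_deriv_ge T₁ m₁ e β hm₁ he₁ w
    have d2 : D2 w ≤ β * E2 w := ES_deriv_le T₂ m₂ e β hm₂ he₂ w
    have n1 : 0 ≤ E2 s := ES_nonneg T₂ m₂ e hm₂ s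
    have n2 : 0 ≤ E1 s := ES_nonneg T₁ m₁ e hm₁ s
    have hep := (Real.exp_pos ((-β) * w)).le
    nlinarith [mul_nonneg (mul_nonneg hep n1) (sub_nonneg.2 d1),
      mul_nonneg (mul_nonneg hep n2) (sub_nonneg.2 d2)]
  have h0 : F s = 0 := by simp [hF]
  have h1 : 0 ≤ F u := h0 ▸ hmono hsu
  have h1' : 0 ≤ Real.exp ((-β) * u) * (E1 u * E2 s - E1 s * E2 u) := h1
  have hp := Real.exp_pos ((-β) * u)
  have hΔ : 0 ≤ E1 u * E2 s - E1 s * E2 u := by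
    by_contra hcon
    push_neg at hcon
    nlinarith [mul_pos hp (show (0:ℝ) < E1 s * E2 u - E1 u * E2 s by linarith)]
  linarith

lemma exp_eq_of_dom (T₁ T₂ : Finset ι) (m₁ m₂ e : ι → ℝ) (a : ℝ)
    (hm₁ : ∀ μ ∈ T₁, 0 < m₁ μ) (he₁ : ∀ μ ∈ T₁, a ≤ e μ)
    (hm₂ : ∀ μ ∈ T₂, 0 ≤ m₂ μ) (he₂ : ∀ μ ∈ T₂, e μ ≤ a)
    (hdom : ∀ t, 0 ≤ t → ES T₁ m₁ e t ≤ ES T₂ m₂ e t) :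
    ∀ μ ∈ T₁, e μ = a := by
  intro μ₀ hμ₀
  by_contra hne
  have hδ : 0 < e μ₀ - a := lt_of_le_of_ne (by linarith [he₁ μ₀ hμ₀]) (by
    intro h; exact hne (by linarith))
  set M := ∑ μ ∈ T₂, m₂ μ with hM
  have key : ∀ t, 0 ≤ t → m₁ μ₀ * Real.exp ((e μ₀ - a) * t) ≤ M := by
    intro t ht
    have h1 : m₁ μ₀ * Real.exp (e μ₀ * t) ≤ ES T₁ m₁ e t :=
      single_le_ES T₁ m₁ e (fun μ hμ => (hm₁ μ hμ).le) hμ₀ t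
    have h2 : ES T₂ m₂ e t ≤ M * Real.exp (a * t) :=
      ES_le_mul_exp T₂ m₂ e a hm₂ he₂ ht
    have h3 : m₁ μ₀ * Real.exp (e μ₀ * t) ≤ M * Real.exp (a * t) :=
      (h1.trans (hdom t ht)).trans h2
    have hexp : Real.exp (e μ₀ * t) = Real.exp ((e μ₀ - a) * t) * Real.exp (a * t) := by
      rw [← Real.exp_add]; ring_nf
    rw [hexp, ← mul_assoc] at h3
    exact le_of_mul_le_mul_right h3 (Real.exp_pos _)
  have grow : Tendsto (fun t => m₁ μ₀ * Real.exp ((e μ₀ - a) * t)) atTop atTop := by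
    apply Tendsto.const_mul_atTop (hm₁ μ₀ hμ₀)
    exact Real.tendsto_exp_atTop.comp (Tendsto.const_mul_atTop hδ tendsto_id)
  obtain ⟨t, h1, h2⟩ := ((grow.eventually_gt_atTop M).and (eventually_ge_atTop 0)).exists
  exact absurd (key t h2) (not_le.2 h1)

lemma le_of_ES_decay (Q : Finset ι) (m e : ι → ℝ) (he : ∀ μ ∈ Q, e μ < 0)
    (x y : ℝ) (h : ∀ t, 0 ≤ t → x ≤ y + ES Q m e t) : x ≤ y := by
  have hlim : Tendsto (fun t => y + ES Q m e t) atTop (nhds (y + 0)) :=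
    tendsto_const_nhds.add (ES_tendsto_zero Q m e he)
  have := ge_of_tendsto hlim ((eventually_ge_atTop 0).mono h)
  simpa using this

open scoped Classical in
lemma lemD (T : Finset ι) (m e : ι → ℝ) (a b : ℝ) (hab : b ≤ a)
    (hmne : ∀ μ ∈ T, m μ ≠ 0)
    (hpos : ∀ μ ∈ T, 0 < m μ → b ≤ e μ ∧ e μ ≤ a)
    (hneg : ∀ μ ∈ T, m μ < 0 → a ≤ e μ ∨ e μ ≤ b)
    {t₁ t t₂ : ℝ} (h₁ : t₁ ≤ t) (h₂ : t ≤ t₂)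
    (H₁ : 0 ≤ ES T m e t₁) (H₂ : 0 ≤ ES T m e t₂) :
    0 ≤ ES T m e t := by
  by_contra hcon
  push_neg at hcon
  have ht₁ : t₁ < t := h₁.lt_of_ne (by rintro rfl; exact absurd H₁ (not_le.2 hcon))
  have ht₂ : t < t₂ := h₂.lt_of_ne (by rintro rfl; exact absurd H₂ (not_le.2 hcon))
  set m' : ι → ℝ := fun μ => m μ * (e μ - a) with hm'
  set η : ℝ → ℝ := fun w => Real.exp ((-a) * w) * ES T m e w with hη
  have hder : ∀ w, HasDerivAt η (Real.exp ((-a) * w) * ES T m' e w) w := by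
    intro w
    have h1 : HasDerivAt (fun y : ℝ => Real.exp ((-a) * y))
        (Real.exp ((-a) * w) * ((-a) * 1)) w :=
      ((hasDerivAt_id w).const_mul (-a)).exp
    have h3 := h1.mul (ES_hasDerivAt T m e w)
    have heq : Real.exp ((-a) * w) * ((-a) * 1) * ES T m e w
        + Real.exp ((-a) * w) * ES T (fun μ => m μ * e μ) e w
        = Real.exp ((-a) * w) * ES T m' e w := by
      have hsum : ES T m' e w = ES T (fun μ => m μ * e μ) e w - a * ES T m e w := by
        unfold ES
        rw [Finset.mul_sum, ← Finset.sum_sub_distrib]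
        apply Finset.sum_congr rfl
        intros; dsimp only [hm']; ring
      rw [hsum]; ring
    exact heq ▸ h3
  have hcont : Continuous η :=
    (Real.continuous_exp.comp (continuous_const.mul continuous_id)).mul
      (ES_continuous T m e)
  have hηt : η t < 0 :=
    mul_neg_of_pos_of_neg (Real.exp_pos _) hcon
  have hηt₁ : 0 ≤ η t₁ := mul_nonneg (Real.exp_pos _).le H₁
  have hηt₂ : 0 ≤ η t₂ := mul_nonneg (Real.exp_pos _).le H₂
  -- MVT on both sides
  obtain ⟨ξ₁, hξ₁mem, hξ₁⟩ := exists_hasDerivAt_eq_slope η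
    (fun w => Real.exp ((-a) * w) * ES T m' e w) ht₁
    hcont.continuousOn (fun w _ => hder w)
  obtain ⟨ξ₂, hξ₂mem, hξ₂⟩ := exists_hasDerivAt_eq_slope η
    (fun w => Real.exp ((-a) * w) * ES T m' e w) ht₂
    hcont.continuousOn (fun w _ => hder w)
  have hφ₁ : ES T m' e ξ₁ < 0 := by
    have hs : (η t - η t₁) / (t - t₁) < 0 :=
      div_neg_of_neg_of_pos (by linarith) (by linarith)
    rw [← hξ₁] at hs
    by_contra hcc
    push_neg at hcc
    exact absurd hs (not_lt.2 (mul_nonneg (Real.exp_pos _).le hcc))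
  have hφ₂ : 0 < ES T m' e ξ₂ := by
    have hs : 0 < (η t₂ - η t) / (t₂ - t) :=
      div_pos (by linarith) (by linarith)
    rw [← hξ₂] at hs
    by_contra hcc
    push_neg at hcc
    nlinarith [Real.exp_pos ((-a) * ξ₂),
      mul_nonneg (Real.exp_pos ((-a) * ξ₂)).le (neg_nonneg.2 hcc)]
  have hξ₁₂ : ξ₁ ≤ ξ₂ := le_of_lt (lt_trans hξ₁mem.2 hξ₂mem.1)
  -- split φ into R (coeff > 0, exponents ≤ b) and Sc (coeff ≤ 0, exponents ≥ b)
  set R := T.filter (fun μ => 0 < m' μ) with hR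
  set Sc := T.filter (fun μ => ¬ 0 < m' μ) with hSc
  have hsplit : ∀ w, ES T m' e w = ES R m' e w - ES Sc (fun μ => -m' μ) e w := by
    intro w
    rw [ES_neg_coeff]
    unfold ES
    rw [sub_neg_eq_add]
    exact (Finset.sum_filter_add_sum_filter_not T _ _).symm
  have hmR : ∀ μ ∈ R, 0 ≤ m' μ := by
    intro μ hμ; exact (Finset.mem_filter.1 hμ).2.le
  have heR : ∀ μ ∈ R, e μ ≤ b := by
    intro μ hμ
    obtain ⟨hμT, hμ'⟩ := Finset.mem_filter.1 hμ
    have hμ'' : 0 < m μ * (e μ - a) := hμ'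
    rcases lt_trichotomy (m μ) 0 with h | h | h
    · have : e μ - a < 0 := by nlinarith
      rcases hneg μ hμT h with h' | h'
      · linarith
      · exact h'
    · exact absurd h (hmne μ hμT)
    · have := (hpos μ hμT h).2
      nlinarith
  have hmS : ∀ μ ∈ Sc, 0 ≤ -m' μ := by
    intro μ hμ
    have h' : ¬ 0 < m μ * (e μ - a) := (Finset.mem_filter.1 hμ).2
    push_neg at h'
    show 0 ≤ -(m μ * (e μ - a))
    linarith
  have heS : ∀ μ ∈ Sc, b ≤ e μ := by
    intro μ hμ
    obtain ⟨hμT, hμ'⟩ := Finset.mem_filter.1 hμ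
    have hμ'' : ¬ 0 < m μ * (e μ - a) := hμ'
    push_neg at hμ''
    rcases lt_trichotomy (m μ) 0 with h | h | h
    · have he' : 0 ≤ e μ - a := by nlinarith
      linarith
    · exact absurd h (hmne μ hμT)
    · exact (hpos μ hμT h).1
  have hcr := cross Sc R (fun μ => -m' μ) m' e b hmS heS hmR heR hξ₁₂
  have hR₁ : 0 ≤ ES R m' e ξ₁ := ES_nonneg R m' e hmR ξ₁
  have hS₂ : 0 ≤ ES Sc (fun μ => -m' μ) e ξ₂ := ES_nonneg Sc _ e hmS ξ₂
  have e₁ := hsplit ξ₁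
  have e₂ := hsplit ξ₂
  nlinarith [hcr, hφ₁, hφ₂, hR₁, hS₂,
    mul_pos (show 0 < ES Sc (fun μ => -m' μ) e ξ₁ by nlinarith)
      (show 0 < ES R m' e ξ₂ by nlinarith)]

lemma shift_ineq (x y : ℝ) (Q : Finset ι) (m e : ι → ℝ) (a t : ℝ)
    (h : x * Real.exp (a * t) ≤ y * Real.exp (a * t) + ES Q m e t) :
    x ≤ y + ES Q m (fun μ => e μ - a) t := by
  rw [← ES_mul_exp_neg]
  have hY := Real.exp_pos (-(a * t))
  have hE : Real.exp (a * t) * Real.exp (-(a * t)) = 1 := by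
    rw [← Real.exp_add]; simp
  calc x = x * (Real.exp (a * t) * Real.exp (-(a * t))) := by rw [hE, mul_one]
    _ = x * Real.exp (a * t) * Real.exp (-(a * t)) := by ring
    _ ≤ (y * Real.exp (a * t) + ES Q m e t) * Real.exp (-(a * t)) :=
        mul_le_mul_of_nonneg_right h hY.le
    _ = y * (Real.exp (a * t) * Real.exp (-(a * t))) + ES Q m e t * Real.exp (-(a * t)) := by
        ring
    _ = y + ES Q m e t * Real.exp (-(a * t)) := by rw [hE, mul_one]

lemma ES_zero (T : Finset ι) (m e : ι → ℝ) : ES T m e 0 = ∑ μ ∈ T, m μ := by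
  simp [ES]

open scoped Classical in
lemma halfH (T : Finset ι) (m e : ι → ℝ) (a b : ℝ) (hab : b ≤ a)
    (hmne : ∀ μ ∈ T, m μ ≠ 0)
    (hpos : ∀ μ ∈ T, 0 < m μ → b ≤ e μ ∧ e μ ≤ a)
    (hneg : ∀ μ ∈ T, m μ < 0 → a ≤ e μ ∨ e μ ≤ b)
    (hray : ∀ t, 0 ≤ t → ES T m e t < 0)
    (hdom : ∀ t, 0 ≤ t →
      ES (T.filter fun μ => m μ < 0 ∧ a ≤ e μ) (fun μ => -m μ) e t
        ≤ ES (T.filter fun μ => 0 < m μ) m e t) :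
    ∀ t, t ≤ 0 → ES T m e t < 0 := by
  set SP := T.filter (fun μ => 0 < m μ) with hSP
  set NA := T.filter (fun μ => m μ < 0 ∧ a ≤ e μ) with hNA
  set N2 := T.filter (fun μ => m μ < 0 ∧ e μ < a) with hN2
  set SPa := SP.filter (fun μ => e μ = a) with hSPa
  set Qs := SP.filter (fun μ => ¬ e μ = a) with hQs
  have hmSP : ∀ μ ∈ SP, 0 ≤ m μ := fun μ hμ => (Finset.mem_filter.1 hμ).2.le
  have hSPsub : ∀ μ ∈ SP, μ ∈ T ∧ 0 < m μ := fun μ hμ => Finset.mem_filter.1 hμ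
  have heSP_le : ∀ μ ∈ SP, e μ ≤ a := fun μ hμ =>
    (hpos μ (hSPsub μ hμ).1 (hSPsub μ hμ).2).2
  have heSP_ge : ∀ μ ∈ SP, b ≤ e μ := fun μ hμ =>
    (hpos μ (hSPsub μ hμ).1 (hSPsub μ hμ).2).1
  have hmNA : ∀ μ ∈ NA, 0 < -m μ := fun μ hμ => by
    linarith [(Finset.mem_filter.1 hμ).2.1]
  have hmN2 : ∀ μ ∈ N2, 0 ≤ -m μ := fun μ hμ => by
    linarith [(Finset.mem_filter.1 hμ).2.1]
  have heN2_lt : ∀ μ ∈ N2, e μ < a := fun μ hμ => (Finset.mem_filter.1 hμ).2.2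
  have heN2_le : ∀ μ ∈ N2, e μ ≤ b := by
    intro μ hμ
    obtain ⟨hμT, hμm, hμe⟩ := Finset.mem_filter.1 hμ
    rcases hneg μ hμT hμm with h | h
    · linarith
    · exact h
  have heNA : ∀ μ ∈ NA, e μ = a := by
    apply exp_eq_of_dom NA SP (fun μ => -m μ) m e a hmNA
      (fun μ hμ => (Finset.mem_filter.1 hμ).2.2) hmSP heSP_le hdom
  set Da := ∑ μ ∈ NA, -m μ with hDa
  set Ca := ∑ μ ∈ SPa, m μ with hCa
  have hNAe : ∀ t, ES NA (fun μ => -m μ) e t = Da * Real.exp (a * t) :=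
    fun t => ES_const_exp NA (fun μ => -m μ) e a heNA t
  have hSPe : ∀ t, ES SP m e t = Ca * Real.exp (a * t) + ES Qs m e t := by
    intro t
    have h1 := Finset.sum_filter_add_sum_filter_not SP (fun μ => e μ = a)
      (fun μ => m μ * Real.exp (e μ * t))
    have h2 : ES SPa m e t = Ca * Real.exp (a * t) :=
      ES_const_exp SPa m e a (fun μ hμ => (Finset.mem_filter.1 hμ).2) t
    have h3 : ES SP m e t = ES SPa m e t + ES Qs m e t := by
      unfold ES; exact h1.symm
    rw [h3, h2]
  have heQ : ∀ μ ∈ Qs, e μ - a < 0 := by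
    intro μ hμ
    obtain ⟨hμSP, hμne⟩ := Finset.mem_filter.1 hμ
    have := heSP_le μ hμSP
    have : e μ < a := lt_of_le_of_ne this hμne
    linarith
  have hDaCa : Da ≤ Ca := by
    apply le_of_ES_decay Qs m (fun μ => e μ - a) heQ
    intro t ht
    apply shift_ineq
    have h := hdom t ht
    rw [hNAe t, hSPe t] at h
    exact h
  have hQnn : ∀ t, 0 ≤ ES Qs m e t :=
    fun t => ES_nonneg Qs m e (fun μ hμ => hmSP μ (Finset.mem_filter.1 hμ).1) t
  have hN2nn : ∀ t, 0 ≤ ES N2 (fun μ => -m μ) e t :=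
    fun t => ES_nonneg N2 _ e hmN2 t
  have hTsplit : ∀ t, ES T m e t = ES SP m e t + (ES NA m e t + ES N2 m e t) := by
    intro t
    have h1 := Finset.sum_filter_add_sum_filter_not T (fun μ => 0 < m μ)
      (fun μ => m μ * Real.exp (e μ * t))
    have hTn : T.filter (fun μ => ¬ 0 < m μ) = T.filter (fun μ => m μ < 0) :=
      Finset.filter_congr (fun μ hμ => by
        constructor
        · intro h; exact lt_of_le_of_ne (not_lt.1 h) (hmne μ hμ)
        · intro h; exact not_lt.2 h.le)
    have h2 := Finset.sum_filter_add_sum_filter_not (T.filter (fun μ => m μ < 0))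
      (fun μ => a ≤ e μ) (fun μ => m μ * Real.exp (e μ * t))
    have hfa : (T.filter (fun μ => m μ < 0)).filter (fun μ => a ≤ e μ) = NA := by
      rw [Finset.filter_filter]
    have hfb : (T.filter (fun μ => m μ < 0)).filter (fun μ => ¬ a ≤ e μ) = N2 := by
      rw [Finset.filter_filter]
      exact Finset.filter_congr (fun μ hμ => by
        constructor
        · rintro ⟨hh1, hh2⟩; exact ⟨hh1, not_le.1 hh2⟩
        · rintro ⟨hh1, hh2⟩; exact ⟨hh1, not_le.2 hh2⟩)
    have e1 : ES T m e t
        = ES SP m e t + ES (T.filter fun μ => m μ < 0) m e t := by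
      unfold ES; rw [← hTn]; exact h1.symm
    have e2 : ES (T.filter fun μ => m μ < 0) m e t = ES NA m e t + ES N2 m e t := by
      unfold ES; rw [← hfa, ← hfb]; exact h2.symm
    rw [e1, e2]
  have hNAm : ∀ t, ES NA m e t = -(Da * Real.exp (a * t)) := by
    intro t
    have := ES_neg_coeff NA m e t
    rw [hNAe t] at this
    linarith
  have hN2m : ∀ t, ES N2 m e t = -ES N2 (fun μ => -m μ) e t := by
    intro t
    have := ES_neg_coeff N2 m e t
    linarith
  have hfull : ∀ t, ES T m e t
      = Ca * Real.exp (a * t) + ES Qs m e t - Da * Real.exp (a * t)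
        - ES N2 (fun μ => -m μ) e t := by
    intro t
    rw [hTsplit t, hSPe t, hNAm t, hN2m t]
    ring
  have hCaDa : Ca ≤ Da := by
    have hdec : ∀ t, 0 ≤ t → Ca ≤ Da + ES N2 (fun μ => -m μ) (fun μ => e μ - a) t := by
      intro t ht
      apply shift_ineq
      have h := hray t ht
      rw [hfull t] at h
      have := hQnn t
      linarith
    exact le_of_ES_decay N2 (fun μ => -m μ) (fun μ => e μ - a)
      (fun μ hμ => by show e μ - a < 0; linarith [heN2_lt μ hμ]) Ca Da hdec
  have hCaDa' : Ca = Da := le_antisymm hCaDa hDaCa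
  have heq : ∀ t, ES T m e t = ES Qs m e t - ES N2 (fun μ => -m μ) e t := by
    intro t
    rw [hfull t, hCaDa']
    ring
  intro t₀ ht₀
  by_contra hcc
  push_neg at hcc
  set Z : Set ℝ := Set.Iic 0 ∩ (ES T m e) ⁻¹' Set.Ici 0 with hZ
  have hZc : IsClosed Z := isClosed_Iic.inter (isClosed_Ici.preimage (ES_continuous T m e))
  have hZne : Z.Nonempty := ⟨t₀, ht₀, hcc⟩
  have hZbdd : BddAbove Z := ⟨0, fun z hz => hz.1⟩
  have hT₁ := hZc.csSup_mem hZne hZbdd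
  set T₁ := sSup Z with hT₁def
  obtain ⟨hT₁le, hT₁ge⟩ := hT₁
  have hT₁ge' : 0 ≤ ES T m e T₁ := hT₁ge
  have hcr := cross Qs N2 m (fun μ => -m μ) e b
    (fun μ hμ => hmSP μ (Finset.mem_filter.1 hμ).1)
    (fun μ hμ => heSP_ge μ (Finset.mem_filter.1 hμ).1)
    hmN2 heN2_le (hT₁le : T₁ ≤ 0)
  have h00 : ES T m e 0 < 0 := hray 0 le_rfl
  rw [heq 0] at h00
  rw [heq T₁] at hT₁ge'
  rcases eq_or_lt_of_le (hN2nn T₁) with hz | hz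
  · have hco := ES_coeffs_zero N2 (fun μ => -m μ) e hmN2 hz.symm
    have hN20 : ES N2 (fun μ => -m μ) e 0 = 0 :=
      Finset.sum_eq_zero fun μ hμ => by show -m μ * Real.exp (e μ * 0) = 0; rw [hco μ hμ]; ring
    linarith [hQnn 0]
  · have k1 : ES N2 (fun μ => -m μ) e T₁ * ES N2 (fun μ => -m μ) e 0
        ≤ ES Qs m e T₁ * ES N2 (fun μ => -m μ) e 0 :=
      mul_le_mul_of_nonneg_right (by linarith) (hN2nn 0)
    have k2 : ES N2 (fun μ => -m μ) e T₁ * ES Qs m e 0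
        < ES N2 (fun μ => -m μ) e T₁ * ES N2 (fun μ => -m μ) e 0 :=
      mul_lt_mul_of_pos_left (by linarith) hz
    nlinarith [hcr, k1, k2]

open scoped Classical in
lemma lemF (T : Finset ι) (m e : ι → ℝ) (a b : ℝ) (hab : b ≤ a)
    (hmne : ∀ μ ∈ T, m μ ≠ 0)
    (hpos : ∀ μ ∈ T, 0 < m μ → b ≤ e μ ∧ e μ ≤ a)
    (hneg : ∀ μ ∈ T, m μ < 0 → a ≤ e μ ∨ e μ ≤ b)
    (hall : ∀ t, ES T m e t < 0)
    (hdomA : ∀ t, ES (T.filter fun μ => m μ < 0 ∧ a ≤ e μ) (fun μ => -m μ) e t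
        ≤ ES (T.filter fun μ => 0 < m μ) m e t)
    (hdomB : ∀ t, ES (T.filter fun μ => m μ < 0 ∧ e μ ≤ b) (fun μ => -m μ) e t
        ≤ ES (T.filter fun μ => 0 < m μ) m e t) : False := by
  set SP := T.filter (fun μ => 0 < m μ) with hSP
  set NA := T.filter (fun μ => m μ < 0 ∧ a ≤ e μ) with hNA
  set NB := T.filter (fun μ => m μ < 0 ∧ e μ ≤ b) with hNB
  have hmSP : ∀ μ ∈ SP, 0 ≤ m μ := fun μ hμ => (Finset.mem_filter.1 hμ).2.le
  have hSPsub : ∀ μ ∈ SP, μ ∈ T ∧ 0 < m μ := fun μ hμ => Finset.mem_filter.1 hμ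
  have heSP_le : ∀ μ ∈ SP, e μ ≤ a := fun μ hμ =>
    (hpos μ (hSPsub μ hμ).1 (hSPsub μ hμ).2).2
  have heSP_ge : ∀ μ ∈ SP, b ≤ e μ := fun μ hμ =>
    (hpos μ (hSPsub μ hμ).1 (hSPsub μ hμ).2).1
  have hmNA : ∀ μ ∈ NA, 0 < -m μ := fun μ hμ => by
    linarith [(Finset.mem_filter.1 hμ).2.1]
  have hmNB : ∀ μ ∈ NB, 0 < -m μ := fun μ hμ => by
    linarith [(Finset.mem_filter.1 hμ).2.1]
  have heNA : ∀ μ ∈ NA, e μ = a :=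
    exp_eq_of_dom NA SP (fun μ => -m μ) m e a hmNA
      (fun μ hμ => (Finset.mem_filter.1 hμ).2.2) hmSP heSP_le
      (fun t ht => hdomA t)
  have heNB : ∀ μ ∈ NB, e μ = b := by
    have h := exp_eq_of_dom NB SP (fun μ => -m μ) m (fun μ => -e μ) (-b) hmNB
      (fun μ hμ => by
        have := (Finset.mem_filter.1 hμ).2.2
        show -b ≤ -e μ; linarith)
      hmSP
      (fun μ hμ => by
        have := heSP_ge μ hμ
        show -e μ ≤ -b; linarith)
      (fun t ht => by
        rw [ES_reflect, ES_reflect]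
        exact hdomB (-t))
    intro μ hμ
    have := h μ hμ
    have h2 : -e μ = -b := this
    linarith
  rcases eq_or_lt_of_le hab with heqab | hltab
  · -- a = b : all negative terms lie in NA
    have hsub : T.filter (fun μ => m μ < 0) = NA := by
      rw [hNA]
      apply Finset.filter_congr
      intro μ hμ
      constructor
      · intro h
        refine ⟨h, ?_⟩
        rcases hneg μ hμ h with h' | h'
        · exact h'
        · have : μ ∈ NB := Finset.mem_filter.2 ⟨hμ, h, h'⟩
          rw [heNB μ this, ← heqab]
      · intro h; exact h.1
    have h1 := Finset.sum_filter_add_sum_filter_not T (fun μ => 0 < m μ)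
      (fun μ => m μ * Real.exp (e μ * 0))
    have hTn : T.filter (fun μ => ¬ 0 < m μ) = T.filter (fun μ => m μ < 0) :=
      Finset.filter_congr (fun μ hμ => by
        constructor
        · intro h; exact lt_of_le_of_ne (not_lt.1 h) (hmne μ hμ)
        · intro h; exact not_lt.2 h.le)
    have e1 : ES T m e 0 = ES SP m e 0 + ES NA m e 0 := by
      unfold ES; rw [← hsub, ← hTn]; exact h1.symm
    have e2 : ES NA m e 0 = -ES NA (fun μ => -m μ) e 0 := by
      have := ES_neg_coeff NA m e 0; linarith
    have := hdomA 0
    have := hall 0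
    linarith [e1, e2, this]
  · -- b < a
    set SPa := SP.filter (fun μ => e μ = a) with hSPa
    set Qa := SP.filter (fun μ => ¬ e μ = a) with hQa
    set SPb := SP.filter (fun μ => e μ = b) with hSPb
    set Da := ∑ μ ∈ NA, -m μ with hDa
    set Ca := ∑ μ ∈ SPa, m μ with hCa
    set Db := ∑ μ ∈ NB, -m μ with hDb
    set Cb := ∑ μ ∈ SPb, m μ with hCb
    have hNAe : ∀ t, ES NA (fun μ => -m μ) e t = Da * Real.exp (a * t) :=
      fun t => ES_const_exp NA (fun μ => -m μ) e a heNA t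
    have hNBe : ∀ t, ES NB (fun μ => -m μ) e t = Db * Real.exp (b * t) :=
      fun t => ES_const_exp NB (fun μ => -m μ) e b heNB t
    have hSPe : ∀ t, ES SP m e t = Ca * Real.exp (a * t) + ES Qa m e t := by
      intro t
      have h1 := Finset.sum_filter_add_sum_filter_not SP (fun μ => e μ = a)
        (fun μ => m μ * Real.exp (e μ * t))
      have h2 : ES SPa m e t = Ca * Real.exp (a * t) :=
        ES_const_exp SPa m e a (fun μ hμ => (Finset.mem_filter.1 hμ).2) t
      have h3 : ES SP m e t = ES SPa m e t + ES Qa m e t := by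
        unfold ES; exact h1.symm
      rw [h3, h2]
    have hDaCa : Da ≤ Ca := by
      apply le_of_ES_decay Qa m (fun μ => e μ - a)
        (fun μ hμ => by
          show e μ - a < 0
          obtain ⟨hμSP, hμne⟩ := Finset.mem_filter.1 hμ
          have := heSP_le μ hμSP
          have h2 : e μ < a := lt_of_le_of_ne this hμne
          linarith)
      intro t ht
      apply shift_ineq
      have h := hdomA t
      rw [hNAe t, hSPe t] at h
      exact h
    -- mirror for B
    have hSPeb : ∀ t, ES SP m e t = Cb * Real.exp (b * t)
        + ES (SP.filter fun μ => ¬ e μ = b) m e t := by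
      intro t
      have h1 := Finset.sum_filter_add_sum_filter_not SP (fun μ => e μ = b)
        (fun μ => m μ * Real.exp (e μ * t))
      have h2 : ES SPb m e t = Cb * Real.exp (b * t) :=
        ES_const_exp SPb m e b (fun μ hμ => (Finset.mem_filter.1 hμ).2) t
      have h3 : ES SP m e t = ES SPb m e t + ES (SP.filter fun μ => ¬ e μ = b) m e t := by
        unfold ES; exact h1.symm
      rw [h3, h2]
    have hDbCb : Db ≤ Cb := by
      apply le_of_ES_decay (SP.filter fun μ => ¬ e μ = b) m (fun μ => (-e μ) - (-b))
        (fun μ hμ => by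
          show (-e μ) - (-b) < 0
          obtain ⟨hμSP, hμne⟩ := Finset.mem_filter.1 hμ
          have := heSP_ge μ hμSP
          have h2 : b < e μ := lt_of_le_of_ne this (fun hh => hμne hh.symm)
          linarith)
      intro t ht
      apply shift_ineq (a := -b)
      have h := hdomB (-t)
      rw [hNBe (-t), hSPeb (-t)] at h
      have hrw : Real.exp (b * (-t)) = Real.exp ((-b) * t) := by ring_nf
      rw [hrw] at h
      have hrw2 : ES (SP.filter fun μ => ¬ e μ = b) m e (-t)
          = ES (SP.filter fun μ => ¬ e μ = b) m (fun μ => -e μ) t := by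
        rw [ES_reflect]
      rw [hrw2] at h
      exact h
    -- now contradiction at t = 0
    have hnegsplit : T.filter (fun μ => m μ < 0) = NA ∪ NB := by
      ext μ
      simp only [Finset.mem_filter, Finset.mem_union, hNA, hNB]
      constructor
      · rintro ⟨hμT, hμm⟩
        rcases hneg μ hμT hμm with h | h
        · exact Or.inl ⟨hμT, hμm, h⟩
        · exact Or.inr ⟨hμT, hμm, h⟩
      · rintro (⟨hμT, hμm, _⟩ | ⟨hμT, hμm, _⟩) <;> exact ⟨hμT, hμm⟩
    have hdisj : Disjoint NA NB := by
      rw [Finset.disjoint_left]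
      intro μ hμA hμB
      have h1 := (Finset.mem_filter.1 hμA).2.2
      have h2 := (Finset.mem_filter.1 hμB).2.2
      linarith
    have h1 := Finset.sum_filter_add_sum_filter_not T (fun μ => 0 < m μ)
      (fun μ => m μ * Real.exp (e μ * 0))
    have hTn : T.filter (fun μ => ¬ 0 < m μ) = T.filter (fun μ => m μ < 0) :=
      Finset.filter_congr (fun μ hμ => by
        constructor
        · intro h; exact lt_of_le_of_ne (not_lt.1 h) (hmne μ hμ)
        · intro h; exact not_lt.2 h.le)
    have e1 : ES T m e 0 = ES SP m e 0
        + (ES NA m e 0 + ES NB m e 0) := by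
      unfold ES
      rw [← Finset.sum_union hdisj, ← hnegsplit, ← hTn]
      exact h1.symm
    have e2 : ES NA m e 0 = -Da := by
      have hn := ES_neg_coeff NA m e 0
      have := hNAe 0
      simp only [mul_zero, Real.exp_zero, mul_one] at this
      linarith
    have e3 : ES NB m e 0 = -Db := by
      have hn := ES_neg_coeff NB m e 0
      have := hNBe 0
      simp only [mul_zero, Real.exp_zero, mul_one] at this
      linarith
    -- ES SP m e 0 ≥ Ca + Cb
    have e4 : ES SP m e 0 = Ca + ES Qa m e 0 := by
      have := hSPe 0
      simp only [mul_zero, Real.exp_zero, mul_one] at this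
      exact this
    have e5 : Cb ≤ ES Qa m e 0 := by
      -- SPb ⊆ Qa and all coefficients of Qa are nonneg
      have hsub : SPb ⊆ Qa := by
        intro μ hμ
        obtain ⟨hμSP, hμb⟩ := Finset.mem_filter.1 hμ
        refine Finset.mem_filter.2 ⟨hμSP, ?_⟩
        intro hh
        rw [hh] at hμb
        exact absurd hμb.symm (ne_of_lt hltab)
      have := Finset.sum_le_sum_of_subset_of_nonneg
        (f := fun μ => m μ * Real.exp (e μ * 0)) hsub
        (fun μ hμ _ => mul_nonneg (hmSP μ (Finset.mem_filter.1 hμ).1) (Real.exp_pos _).le)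
      calc Cb = ∑ μ ∈ SPb, m μ * Real.exp (e μ * 0) := by
            simp [hCb]
        _ ≤ ∑ μ ∈ Qa, m μ * Real.exp (e μ * 0) := this
        _ = ES Qa m e 0 := rfl
    have := hall 0
    linarith [e1, e2, e3, e4, e5, hDaCa, hDbCb]

open scoped Classical in
lemma keyG (T : Finset ι) (m e : ι → ℝ) (a b : ℝ) (hab : b ≤ a)
    (hmne : ∀ μ ∈ T, m μ ≠ 0)
    (hpos : ∀ μ ∈ T, 0 < m μ → b ≤ e μ ∧ e μ ≤ a)
    (hneg : ∀ μ ∈ T, m μ < 0 → a ≤ e μ ∨ e μ ≤ b)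
    (h0 : ES T m e 0 < 0) :
    ∃ t, (∀ s ∈ Set.uIcc 0 t, ES T m e s < 0) ∧
      (ES (T.filter fun μ => 0 < m μ ∨ a ≤ e μ) m e t < 0 ∨
       ES (T.filter fun μ => 0 < m μ ∨ e μ ≤ b) m e t < 0) := by
  by_contra hG
  push_neg at hG
  set SP := T.filter (fun μ => 0 < m μ) with hSP
  set NA := T.filter (fun μ => m μ < 0 ∧ a ≤ e μ) with hNA
  set NB := T.filter (fun μ => m μ < 0 ∧ e μ ≤ b) with hNB
  -- split identities for the A- and B-restricted sums
  have hAsplit : ∀ t, ES (T.filter fun μ => 0 < m μ ∨ a ≤ e μ) m e t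
      = ES SP m e t - ES NA (fun μ => -m μ) e t := by
    intro t
    have hU : T.filter (fun μ => 0 < m μ ∨ a ≤ e μ) = SP ∪ NA := by
      ext μ
      simp only [Finset.mem_filter, Finset.mem_union, hSP, hNA]
      constructor
      · rintro ⟨hμT, h | h⟩
        · exact Or.inl ⟨hμT, h⟩
        · rcases lt_or_gt_of_ne (hmne μ hμT) with hm | hm
          · exact Or.inr ⟨hμT, hm, h⟩
          · exact Or.inl ⟨hμT, hm⟩
      · rintro (⟨hμT, h⟩ | ⟨hμT, h, h2⟩)
        · exact ⟨hμT, Or.inl h⟩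
        · exact ⟨hμT, Or.inr h2⟩
    have hdisj : Disjoint SP NA := by
      rw [Finset.disjoint_left]
      intro μ h1 h2
      have := (Finset.mem_filter.1 h1).2
      have := (Finset.mem_filter.1 h2).2.1
      linarith
    rw [hU]
    unfold ES
    rw [Finset.sum_union hdisj]
    have := ES_neg_coeff NA m e t
    unfold ES at this
    linarith
  have hBsplit : ∀ t, ES (T.filter fun μ => 0 < m μ ∨ e μ ≤ b) m e t
      = ES SP m e t - ES NB (fun μ => -m μ) e t := by
    intro t
    have hU : T.filter (fun μ => 0 < m μ ∨ e μ ≤ b) = SP ∪ NB := by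
      ext μ
      simp only [Finset.mem_filter, Finset.mem_union, hSP, hNB]
      constructor
      · rintro ⟨hμT, h | h⟩
        · exact Or.inl ⟨hμT, h⟩
        · rcases lt_or_gt_of_ne (hmne μ hμT) with hm | hm
          · exact Or.inr ⟨hμT, hm, h⟩
          · exact Or.inl ⟨hμT, hm⟩
      · rintro (⟨hμT, h⟩ | ⟨hμT, h, h2⟩)
        · exact ⟨hμT, Or.inl h⟩
        · exact ⟨hμT, Or.inr h2⟩
    have hdisj : Disjoint SP NB := by
      rw [Finset.disjoint_left]
      intro μ h1 h2
      have := (Finset.mem_filter.1 h1).2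
      have := (Finset.mem_filter.1 h2).2.1
      linarith
    rw [hU]
    unfold ES
    rw [Finset.sum_union hdisj]
    have := ES_neg_coeff NB m e t
    unfold ES at this
    linarith
  -- dichotomy from lemD
  have hdi : (∀ t, 0 ≤ t → ES T m e t < 0) ∨ (∀ t, t ≤ 0 → ES T m e t < 0) := by
    by_contra hd
    push_neg at hd
    obtain ⟨⟨t₂, ht₂, h₂⟩, ⟨t₁, ht₁, h₁⟩⟩ := hd
    exact absurd (lemD T m e a b hab hmne hpos hneg ht₁ ht₂ h₁ h₂) (not_le.2 h0)
  rcases hdi with hray | hray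
  · -- negative on the right ray
    have hreach : ∀ t, 0 ≤ t → ∀ s ∈ Set.uIcc 0 t, ES T m e s < 0 := by
      intro t ht s hs
      rw [Set.uIcc_of_le ht] at hs
      exact hray s hs.1
    have domA : ∀ t, 0 ≤ t → ES NA (fun μ => -m μ) e t ≤ ES SP m e t := by
      intro t ht
      have := (hG t (hreach t ht)).1
      rw [hAsplit t] at this
      linarith
    have hleft : ∀ t, t ≤ 0 → ES T m e t < 0 :=
      halfH T m e a b hab hmne hpos hneg hray domA
    have hall : ∀ t, ES T m e t < 0 := by
      intro t
      rcases le_or_gt 0 t with h | h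
      · exact hray t h
      · exact hleft t h.le
    have hreach' : ∀ t, ∀ s ∈ Set.uIcc 0 t, ES T m e s < 0 := fun t s _ => hall s
    have domA' : ∀ t, ES NA (fun μ => -m μ) e t ≤ ES SP m e t := by
      intro t
      have := (hG t (hreach' t)).1
      rw [hAsplit t] at this; linarith
    have domB' : ∀ t, ES NB (fun μ => -m μ) e t ≤ ES SP m e t := by
      intro t
      have := (hG t (hreach' t)).2
      rw [hBsplit t] at this; linarith
    exact lemF T m e a b hab hmne hpos hneg hall domA' domB'
  · -- negative on the left ray : mirror via e ↦ -e
    have hreach : ∀ t, t ≤ 0 → ∀ s ∈ Set.uIcc 0 t, ES T m e s < 0 := by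
      intro t ht s hs
      rw [Set.uIcc_of_ge ht] at hs
      exact hray s hs.2
    have domB : ∀ t, t ≤ 0 → ES NB (fun μ => -m μ) e t ≤ ES SP m e t := by
      intro t ht
      have := (hG t (hreach t ht)).2
      rw [hBsplit t] at this
      linarith
    have hpos' : ∀ μ ∈ T, 0 < m μ → -a ≤ -e μ ∧ -e μ ≤ -b := by
      intro μ hμ h
      obtain ⟨h1, h2⟩ := hpos μ hμ h
      constructor <;> linarith
    have hneg' : ∀ μ ∈ T, m μ < 0 → -b ≤ -e μ ∨ -e μ ≤ -a := by
      intro μ hμ h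
      rcases hneg μ hμ h with h' | h'
      · right; linarith
      · left; linarith
    have hray' : ∀ t, 0 ≤ t → ES T m (fun μ => -e μ) t < 0 := by
      intro t ht
      rw [ES_reflect]
      exact hray (-t) (by linarith)
    have hfilt : T.filter (fun μ => m μ < 0 ∧ -b ≤ -e μ) = NB := by
      rw [hNB]
      exact Finset.filter_congr (fun μ _ => by
        constructor
        · rintro ⟨h1, h2⟩; exact ⟨h1, by linarith⟩
        · rintro ⟨h1, h2⟩; exact ⟨h1, by linarith⟩)
    have hdom' : ∀ t, 0 ≤ t →
        ES (T.filter fun μ => m μ < 0 ∧ -b ≤ -e μ) (fun μ => -m μ) (fun μ => -e μ) t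
          ≤ ES (T.filter fun μ => 0 < m μ) m (fun μ => -e μ) t := by
      intro t ht
      rw [hfilt, ES_reflect, ES_reflect]
      exact domB (-t) (by linarith)
    have hleft' := halfH T m (fun μ => -e μ) (-b) (-a) (by linarith) hmne hpos' hneg'
      hray' hdom'
    have hright : ∀ t, 0 ≤ t → ES T m e t < 0 := by
      intro t ht
      have := hleft' (-t) (by linarith)
      rw [ES_reflect] at this
      simpa using this
    have hall : ∀ t, ES T m e t < 0 := by
      intro t
      rcases le_or_gt 0 t with h | h
      · exact hright t h
      · exact hray t h.le
    have hreach' : ∀ t, ∀ s ∈ Set.uIcc 0 t, ES T m e s < 0 := fun t s _ => hall s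
    have domA' : ∀ t, ES NA (fun μ => -m μ) e t ≤ ES SP m e t := by
      intro t
      have := (hG t (hreach' t)).1
      rw [hAsplit t] at this; linarith
    have domB' : ∀ t, ES NB (fun μ => -m μ) e t ≤ ES SP m e t := by
      intro t
      have := (hG t (hreach' t)).2
      rw [hBsplit t] at this; linarith
    exact lemF T m e a b hab hmne hpos hneg hall domA' domB'

end SigProof

section Glue

open SigProof

variable {n : ℕ}

lemma isConnComp_ccIn {X : Set (Fin n → ℝ)} {x : Fin n → ℝ} (hx : x ∈ X) :
    IsConnComp X (connectedComponentIn X x) := by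
  refine ⟨⟨x, mem_connectedComponentIn hx⟩, connectedComponentIn_subset X x,
    isPreconnected_connectedComponentIn, ?_⟩
  intro W hUW hWX hW
  have h1 : W ⊆ connectedComponentIn X x :=
    hW.subset_connectedComponentIn (hUW (mem_connectedComponentIn hx)) hWX
  exact Set.Subset.antisymm h1 hUW

lemma isConnComp_eq_ccIn {X U : Set (Fin n → ℝ)} {x : Fin n → ℝ}
    (hU : IsConnComp X U) (hx : x ∈ U) : U = connectedComponentIn X x := by
  have h1 : U ⊆ connectedComponentIn X x :=
    hU.2.2.1.subset_connectedComponentIn hx hU.2.1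
  exact (hU.2.2.2 _ h1 (connectedComponentIn_subset X x)
    isPreconnected_connectedComponentIn).symm

lemma negSetOn_subset_negSet {S : Finset (Fin n → ℝ)} {c : (Fin n → ℝ) → ℝ}
    {F : Set (Fin n → ℝ)} (hF : ∀ μ ∈ S, μ ∉ F → c μ ≤ 0) :
    negSetOn S c F ⊆ negSet S c := by
  rintro x ⟨hxpos, hxneg⟩
  refine ⟨hxpos, lt_of_le_of_lt ?_ hxneg⟩
  unfold sig sigOn
  apply Finset.sum_le_sum
  intro μ hμ
  by_cases hmem : μ ∈ F
  · simp only [if_pos hmem]; exact le_refl _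
  · simp only [if_neg hmem]
    exact mul_nonpos_of_nonpos_of_nonneg (hF μ hμ hmem)
      (Finset.prod_nonneg fun i _ => Real.rpow_nonneg (hxpos i).le _)

lemma exists_win (S : Finset (Fin n → ℝ)) (c : (Fin n → ℝ) → ℝ)
    (hc : ∀ μ ∈ S, c μ ≠ 0) (v : Fin n → ℝ) (a b : ℝ) (hab : b ≤ a)
    (hpos : sigPosS S c ⊆ Hminus v a ∩ Hplus v b)
    (hneg : sigNegS S c ⊆ (HminusO v a ∩ HplusO v b)ᶜ)
    (A B : Set (Fin n → ℝ))
    (hA : A = (Hplus v a ∩ sigNegS S c) ∪ sigPosS S c)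
    (hB : B = (Hminus v b ∩ sigNegS S c) ∪ sigPosS S c)
    {x : Fin n → ℝ} (hx : x ∈ negSet S c) :
    ∃ z ∈ connectedComponentIn (negSet S c) x,
      z ∈ negSetOn S c A ∨ z ∈ negSetOn S c B := by
  classical
  obtain ⟨hxpos, hxneg⟩ := hx
  set m : (Fin n → ℝ) → ℝ := fun μ => c μ * ∏ i, x i ^ μ i with hm
  set ee : (Fin n → ℝ) → ℝ := fun μ => ∑ i, v i * μ i with hee
  set γ : ℝ → (Fin n → ℝ) := fun t i => x i * Real.exp (v i * t) with hγ
  have hγ0 : γ 0 = x := by funext i; simp [hγ]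
  have hγpos : ∀ t i, 0 < γ t i := fun t i => mul_pos (hxpos i) (Real.exp_pos _)
  have hprodpos : ∀ μ : Fin n → ℝ, 0 < ∏ i, x i ^ μ i :=
    fun μ => Finset.prod_pos fun i _ => Real.rpow_pos_of_pos (hxpos i) _
  have hprod : ∀ (t : ℝ) (μ : Fin n → ℝ), (∏ i, (γ t i) ^ (μ i))
      = (∏ i, x i ^ μ i) * Real.exp (ee μ * t) := by
    intro t μ
    have h1 : ∀ i, (γ t i) ^ (μ i) = x i ^ μ i * Real.exp (v i * μ i * t) := by
      intro i
      show (x i * Real.exp (v i * t)) ^ (μ i) = _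
      rw [Real.mul_rpow (hxpos i).le (Real.exp_pos _).le]
      congr 1
      rw [Real.rpow_def_of_pos (Real.exp_pos _), Real.log_exp]
      congr 1
      ring
    calc ∏ i, (γ t i) ^ (μ i) = ∏ i, (x i ^ μ i * Real.exp (v i * μ i * t)) :=
          Finset.prod_congr rfl fun i _ => h1 i
      _ = (∏ i, x i ^ μ i) * ∏ i, Real.exp (v i * μ i * t) := Finset.prod_mul_distrib
      _ = (∏ i, x i ^ μ i) * Real.exp (∑ i, v i * μ i * t) := by rw [Real.exp_sum]
      _ = (∏ i, x i ^ μ i) * Real.exp (ee μ * t) := by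
          rw [hee]; congr 1; rw [Finset.sum_mul]
  have hsig : ∀ t, sig S c (γ t) = ES S m ee t := by
    intro t
    unfold sig ES
    apply Finset.sum_congr rfl
    intro μ _
    rw [hprod t μ, hm]; ring
  have hsigOn : ∀ (F : Set (Fin n → ℝ)) (t : ℝ),
      sigOn S c F (γ t) = ES (S.filter (· ∈ F)) m ee t := by
    intro F t
    unfold sigOn ES
    rw [Finset.sum_filter]
    apply Finset.sum_congr rfl
    intro μ _
    by_cases hμF : μ ∈ F
    · simp only [if_pos hμF]
      rw [hprod t μ, hm]; ring
    · simp only [if_neg hμF]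
  have hmne : ∀ μ ∈ S, m μ ≠ 0 := fun μ hμ =>
    mul_ne_zero (hc μ hμ) (ne_of_gt (hprodpos μ))
  have hmc : ∀ μ, (0 < m μ ↔ 0 < c μ) := by
    intro μ
    constructor
    · intro h
      by_contra hcc
      push_neg at hcc
      have : m μ ≤ 0 := mul_nonpos_of_nonpos_of_nonneg hcc (hprodpos μ).le
      linarith
    · intro h
      exact mul_pos h (hprodpos μ)
  have hmcneg : ∀ μ, (m μ < 0 ↔ c μ < 0) := by
    intro μ
    constructor
    · intro h
      by_contra hcc
      push_neg at hcc
      have : 0 ≤ m μ := mul_nonneg hcc (hprodpos μ).le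
      linarith
    · intro h
      exact mul_neg_of_neg_of_pos h (hprodpos μ)
  have hposT : ∀ μ ∈ S, 0 < m μ → b ≤ ee μ ∧ ee μ ≤ a := by
    intro μ hμ h
    have hcp : 0 < c μ := (hmc μ).1 h
    have h2 := hpos (show μ ∈ sigPosS S c from ⟨hμ, hcp⟩)
    exact ⟨h2.2, h2.1⟩
  have hnegT : ∀ μ ∈ S, m μ < 0 → a ≤ ee μ ∨ ee μ ≤ b := by
    intro μ hμ h
    have hcn : c μ < 0 := (hmcneg μ).1 h
    have h2 := hneg (show μ ∈ sigNegS S c from ⟨hμ, hcn⟩)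
    by_contra hcon
    push_neg at hcon
    exact h2 ⟨hcon.1, hcon.2⟩
  have h0 : ES S m ee 0 < 0 := by
    rw [← hsig 0, hγ0]; exact hxneg
  obtain ⟨t, hint, hwin⟩ := keyG S m ee a b hab hmne hposT hnegT h0
  have hγcont : Continuous γ :=
    continuous_pi fun i => continuous_const.mul
      (Real.continuous_exp.comp (continuous_const.mul continuous_id))
  have hKpc : IsPreconnected (γ '' Set.uIcc 0 t) :=
    isPreconnected_uIcc.image γ hγcont.continuousOn
  have hKsub : γ '' Set.uIcc 0 t ⊆ negSet S c := by
    rintro _ ⟨s, hs, rfl⟩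
    exact ⟨fun i => hγpos s i, by rw [hsig s]; exact hint s hs⟩
  have hxK : x ∈ γ '' Set.uIcc 0 t := ⟨0, Set.left_mem_uIcc, hγ0⟩
  have hKcc : γ '' Set.uIcc 0 t ⊆ connectedComponentIn (negSet S c) x :=
    hKpc.subset_connectedComponentIn hxK hKsub
  refine ⟨γ t, hKcc ⟨t, Set.right_mem_uIcc, rfl⟩, ?_⟩
  have hAfilt : S.filter (· ∈ A) = S.filter (fun μ => 0 < m μ ∨ a ≤ ee μ) := by
    apply Finset.filter_congr
    intro μ hμ
    simp only [hA, Set.mem_union, Set.mem_inter_iff, Hplus, sigNegS, sigPosS,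
      Set.mem_setOf_eq]
    constructor
    · rintro (⟨h1, _⟩ | ⟨_, h2⟩)
      · exact Or.inr h1
      · exact Or.inl ((hmc μ).2 h2)
    · rintro (h1 | h1)
      · exact Or.inr ⟨hμ, (hmc μ).1 h1⟩
      · rcases lt_or_gt_of_ne (hc μ hμ) with hcneg | hcpos
        · exact Or.inl ⟨h1, hμ, hcneg⟩
        · exact Or.inr ⟨hμ, hcpos⟩
  have hBfilt : S.filter (· ∈ B) = S.filter (fun μ => 0 < m μ ∨ ee μ ≤ b) := by
    apply Finset.filter_congr
    intro μ hμ
    simp only [hB, Set.mem_union, Set.mem_inter_iff, Hminus, sigNegS, sigPosS,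
      Set.mem_setOf_eq]
    constructor
    · rintro (⟨h1, _⟩ | ⟨_, h2⟩)
      · exact Or.inr h1
      · exact Or.inl ((hmc μ).2 h2)
    · rintro (h1 | h1)
      · exact Or.inr ⟨hμ, (hmc μ).1 h1⟩
      · rcases lt_or_gt_of_ne (hc μ hμ) with hcneg | hcpos
        · exact Or.inl ⟨h1, hμ, hcneg⟩
        · exact Or.inr ⟨hμ, hcpos⟩
  rcases hwin with hw | hw
  · left
    exact ⟨fun i => hγpos t i, by rw [hsigOn A t, hAfilt]; exact hw⟩
  · right
    exact ⟨fun i => hγpos t i, by rw [hsigOn B t, hBfilt]; exact hw⟩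

end Glue

/-- Proposition 2.10: the number of negative connected components of `f` is bounded by the
number of connected components `C` of the bipartite intersection graph on the components of
`f|_A` and `f|_B`, which is in turn at most the total number of those components.
The components of the graph are modelled as the quotient of the vertex set by (the
equivalence relation generated by) the edge relation. -/
theorem stmt_7 (n : ℕ) (S : Finset (Fin n → ℝ)) (c : (Fin n → ℝ) → ℝ)
    (hc : ∀ μ ∈ S, c μ ≠ 0)
    (v : Fin n → ℝ) (hv : v ≠ 0) (a b : ℝ) (hab : b ≤ a)
    (hpos : sigPosS S c ⊆ Hminus v a ∩ Hplus v b)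
    (hneg : sigNegS S c ⊆ (HminusO v a ∩ HplusO v b)ᶜ)
    (A B : Set (Fin n → ℝ))
    (hA : A = (Hplus v a ∩ sigNegS S c) ∪ sigPosS S c)
    (hB : B = (Hminus v b ∩ sigNegS S c) ∪ sigPosS S c)
    (C : Cardinal)
    (hC : C = Cardinal.mk (Quot (fun p q :
        {U : Set (Fin n → ℝ) // IsConnComp (negSetOn S c A) U} ⊕
        {V : Set (Fin n → ℝ) // IsConnComp (negSetOn S c B) V} =>
      ∃ U V', p = Sum.inl U ∧ q = Sum.inr V' ∧ (U.1 ∩ V'.1).Nonempty))) :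
    compCard (negSet S c) ≤ C ∧
      C ≤ compCard (negSetOn S c A) + compCard (negSetOn S c B) := by
  classical
  have hsubA : negSetOn S c A ⊆ negSet S c := by
    apply negSetOn_subset_negSet
    intro μ hμ hμA
    by_contra hcon
    push_neg at hcon
    apply hμA
    rw [hA]
    exact Or.inr ⟨hμ, hcon⟩
  have hsubB : negSetOn S c B ⊆ negSet S c := by
    apply negSetOn_subset_negSet
    intro μ hμ hμB
    by_contra hcon
    push_neg at hcon
    apply hμB
    rw [hB]
    exact Or.inr ⟨hμ, hcon⟩
  constructor
  · rw [hC]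
    set r := fun p q :
        {U : Set (Fin n → ℝ) // IsConnComp (negSetOn S c A) U} ⊕
        {V : Set (Fin n → ℝ) // IsConnComp (negSetOn S c B) V} =>
      ∃ U V', p = Sum.inl U ∧ q = Sum.inr V' ∧ (U.1 ∩ V'.1).Nonempty with hr
    set fl : {U : Set (Fin n → ℝ) // IsConnComp (negSetOn S c A) U} →
        {W : Set (Fin n → ℝ) // IsConnComp (negSet S c) W} := fun U =>
      ⟨connectedComponentIn (negSet S c) U.2.1.choose,
        isConnComp_ccIn (hsubA (U.2.2.1 U.2.1.choose_spec))⟩ with hfl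
    set fr : {V : Set (Fin n → ℝ) // IsConnComp (negSetOn S c B) V} →
        {W : Set (Fin n → ℝ) // IsConnComp (negSet S c) W} := fun V =>
      ⟨connectedComponentIn (negSet S c) V.2.1.choose,
        isConnComp_ccIn (hsubB (V.2.2.1 V.2.1.choose_spec))⟩ with hfr
    have hresp : ∀ p q, r p q → Sum.elim fl fr p = Sum.elim fl fr q := by
      rintro p q ⟨U, V', rfl, rfl, w, hwU, hwV⟩
      apply Subtype.ext
      show connectedComponentIn (negSet S c) U.2.1.choose
          = connectedComponentIn (negSet S c) V'.2.1.choose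
      have hU : U.1 ⊆ connectedComponentIn (negSet S c) U.2.1.choose :=
        U.2.2.2.1.subset_connectedComponentIn U.2.1.choose_spec
          (fun y hy => hsubA (U.2.2.1 hy))
      have hV : V'.1 ⊆ connectedComponentIn (negSet S c) V'.2.1.choose :=
        V'.2.2.2.1.subset_connectedComponentIn V'.2.1.choose_spec
          (fun y hy => hsubB (V'.2.2.1 hy))
      rw [connectedComponentIn_eq (hU hwU)]
      exact (connectedComponentIn_eq (hV hwV)).symm
    have hsurj : Function.Surjective (Quot.lift (Sum.elim fl fr) hresp) := by
      rintro ⟨W, hW⟩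
      obtain ⟨x₀, hx₀⟩ := hW.1
      have hx₀X : x₀ ∈ negSet S c := hW.2.1 hx₀
      obtain ⟨z, hzcc, hz⟩ := exists_win S c hc v a b hab hpos hneg A B hA hB hx₀X
      have hWeq : W = connectedComponentIn (negSet S c) x₀ := isConnComp_eq_ccIn hW hx₀
      have hzW : z ∈ W := by rw [hWeq]; exact hzcc
      have hccz : connectedComponentIn (negSet S c) z = W := by
        rw [hWeq]
        exact (connectedComponentIn_eq hzcc).symm
      rcases hz with hzA | hzB
      · refine ⟨Quot.mk _ (Sum.inl ⟨connectedComponentIn (negSetOn S c A) z,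
          isConnComp_ccIn hzA⟩), ?_⟩
        apply Subtype.ext
        show connectedComponentIn (negSet S c)
            ((isConnComp_ccIn hzA).1.choose) = W
        have hchoose := (isConnComp_ccIn (X := negSetOn S c A) hzA).1.choose_spec
        have hKsub : connectedComponentIn (negSetOn S c A) z ⊆ negSet S c :=
          fun y hy => hsubA (connectedComponentIn_subset _ _ hy)
        have hKcc : connectedComponentIn (negSetOn S c A) z
            ⊆ connectedComponentIn (negSet S c) z :=
          isPreconnected_connectedComponentIn.subset_connectedComponentIn
            (mem_connectedComponentIn hzA) hKsub
        rw [← connectedComponentIn_eq (hKcc hchoose)]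
        exact hccz
      · refine ⟨Quot.mk _ (Sum.inr ⟨connectedComponentIn (negSetOn S c B) z,
          isConnComp_ccIn hzB⟩), ?_⟩
        apply Subtype.ext
        show connectedComponentIn (negSet S c)
            ((isConnComp_ccIn hzB).1.choose) = W
        have hchoose := (isConnComp_ccIn (X := negSetOn S c B) hzB).1.choose_spec
        have hKsub : connectedComponentIn (negSetOn S c B) z ⊆ negSet S c :=
          fun y hy => hsubB (connectedComponentIn_subset _ _ hy)
        have hKcc : connectedComponentIn (negSetOn S c B) z
            ⊆ connectedComponentIn (negSet S c) z :=
          isPreconnected_connectedComponentIn.subset_connectedComponentIn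
            (mem_connectedComponentIn hzB) hKsub
        rw [← connectedComponentIn_eq (hKcc hchoose)]
        exact hccz
    exact Cardinal.mk_le_of_surjective hsurj
  · rw [hC]
    refine le_trans (Cardinal.mk_le_of_surjective Quot.mk_surjective) ?_
    rw [Cardinal.mk_sum, Cardinal.lift_id, Cardinal.lift_id]
    rfl
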